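/- arXiv:2107.02144 — 2 statements merged into one kernel-verified Lean document; each statement's English description precedes it below -/
import Mathlib

section
/- Let A be a finite alphabet with |A| ≥ 2, f₁ : A → A, f₂ : A × A → A. The maximum cardinality of a code C ⊆ A³ unambiguous for the Diamond Network, over all choices of f₁, f₂ and C, is exactly |A| − 1. -/
open Finset

/-- Hamming distance on triples. -/
def dH3 {A : Type*} [DecidableEq A] (x y : A × A × A) : ℕ :=
  (if x.1 = y.1 then 0 else 1) + (if x.2.1 = y.2.1 then 0 else 1) +
    (if x.2.2 = y.2.2 then 0 else 1)

/-- The set of possible outputs at the terminal of the Diamond Network. -/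
def Omega {A : Type*} [Fintype A] [DecidableEq A] (f₁ : A → A) (f₂ : A → A → A)
    (x : A × A × A) : Finset (A × A) :=
  (Finset.univ.filter fun x' : A × A × A => dH3 x' x ≤ 1).image
    fun x' => (f₁ x'.1, f₂ x'.2.1 x'.2.2)

/-- An outer code is unambiguous if output sets of distinct codewords are disjoint. -/
def Unambiguous {A : Type*} [Fintype A] [DecidableEq A] (f₁ : A → A) (f₂ : A → A → A)
    (C : Finset (A × A × A)) : Prop :=
  ∀ x ∈ C, ∀ y ∈ C, x ≠ y → Disjoint (Omega f₁ f₂ x) (Omega f₁ f₂ y)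

lemma mem_Omega {A : Type*} [Fintype A] [DecidableEq A] (f₁ : A → A) (f₂ : A → A → A)
    (x : A × A × A) (p : A × A) :
    p ∈ Omega f₁ f₂ x ↔ ∃ x', dH3 x' x ≤ 1 ∧ (f₁ x'.1, f₂ x'.2.1 x'.2.2) = p := by
  simp [Omega]

lemma omega_char {A : Type*} [Fintype A] [DecidableEq A] (s a : A) (p : A × A)
    (hp : p ∈ Omega id (fun u v => if u = v then u else s) (a,a,a)) :
    p.2 = a ∨ (p.1 = a ∧ p.2 = s) := by
  rw [mem_Omega] at hp
  obtain ⟨⟨u, v, w⟩, h1, h2⟩ := hp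
  simp only [dH3] at h1
  subst h2
  by_cases hv : v = a <;> by_cases hw : w = a
  · simp [hv, hw]
  · simp only [hv, hw, if_pos, if_neg, not_false_iff] at h1
    have hu : u = a := by split at h1 <;> first | assumption | omega
    have hvw : v ≠ w := by rw [hv]; exact fun h => hw h.symm
    simp [hu, hvw]
  · simp only [hv, hw, if_pos, if_neg, not_false_iff] at h1
    have hu : u = a := by split at h1 <;> first | assumption | omega
    have hvw : v ≠ w := by rw [hw]; exact hv
    simp [hu, hvw]
  · exfalso
    simp only [hv, hw, if_neg, not_false_iff] at h1
    split at h1 <;> omega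

lemma achieve {A : Type*} [Fintype A] [DecidableEq A] (hA : 2 ≤ Fintype.card A) :
    ∃ (f₁ : A → A) (f₂ : A → A → A) (C : Finset (A × A × A)),
      Unambiguous f₁ f₂ C ∧ C.card = Fintype.card A - 1 := by
  have : Nonempty A := Fintype.card_pos_iff.mp (by omega)
  obtain ⟨s⟩ := this
  refine ⟨id, fun u v => if u = v then u else s,
    (Finset.univ.erase s).image (fun a => (a, a, a)), ?_, ?_⟩
  · intro x hx y hy hxy
    simp only [Finset.mem_image, Finset.mem_erase, Finset.mem_univ, and_true] at hx hy
    obtain ⟨a, ha, rfl⟩ := hx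
    obtain ⟨b, hb, rfl⟩ := hy
    have hab : a ≠ b := fun h => hxy (by rw [h])
    rw [Finset.disjoint_left]
    intro p hpa hpb
    rcases omega_char s a p hpa with h1 | ⟨h1, h1'⟩ <;>
      rcases omega_char s b p hpb with h2 | ⟨h2, h2'⟩
    · exact hab (h1 ▸ h2 ▸ rfl)
    · exact ha (h1 ▸ h2' ▸ rfl)
    · exact hb (h2 ▸ h1' ▸ rfl)
    · exact hab (h1 ▸ h2 ▸ rfl)
  · rw [Finset.card_image_of_injective _ (fun a b h => (Prod.mk.injEq .. ▸ h).1),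
      Finset.card_erase_of_mem (Finset.mem_univ s), Finset.card_univ]

lemma g_inj {A : Type*} [Fintype A] [DecidableEq A] {f₁ : A → A} {f₂ : A → A → A}
    {C : Finset (A × A × A)} (hU : Unambiguous f₁ f₂ C)
    {x y : A × A × A} (hx : x ∈ C) (hy : y ∈ C) (hxy : x ≠ y) :
    f₂ x.2.1 x.2.2 ≠ f₂ y.2.1 y.2.2 := by
  intro h
  have h1 : (f₁ x.1, f₂ x.2.1 x.2.2) ∈ Omega f₁ f₂ x := by
    rw [mem_Omega]
    exact ⟨x, by simp [dH3], rfl⟩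
  have h2 : (f₁ x.1, f₂ x.2.1 x.2.2) ∈ Omega f₁ f₂ y := by
    rw [mem_Omega]
    refine ⟨(x.1, y.2.1, y.2.2), ?_, by simp [h]⟩
    simp only [dH3]
    split_ifs <;> omega
  exact Finset.disjoint_left.mp (hU x hx y hy hxy) h1 h2

lemma converse {A : Type*} [Fintype A] [DecidableEq A] (hA : 2 ≤ Fintype.card A)
    (f₁ : A → A) (f₂ : A → A → A) (C : Finset (A × A × A))
    (hU : Unambiguous f₁ f₂ C) : C.card ≤ Fintype.card A - 1 := by
  by_contra hlt
  push_neg at hlt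
  -- so C.card ≥ Fintype.card A
  have hinj : Set.InjOn (fun x : A × A × A => f₂ x.2.1 x.2.2) C := by
    intro x hx y hy h
    by_contra hxy
    exact g_inj hU hx hy hxy h
  have himcard : (C.image (fun x : A × A × A => f₂ x.2.1 x.2.2)).card = C.card :=
    Finset.card_image_of_injOn hinj
  have hge : Fintype.card A ≤ C.card := by omega
  have himuniv : C.image (fun x : A × A × A => f₂ x.2.1 x.2.2) = Finset.univ := by
    apply Finset.eq_univ_of_card
    have hle : (C.image (fun x : A × A × A => f₂ x.2.1 x.2.2)).card ≤ Fintype.card A :=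
      Finset.card_le_univ _
    omega
  have hsurj : ∀ v : A, ∃ x ∈ C, f₂ x.2.1 x.2.2 = v := by
    intro v
    have : v ∈ C.image (fun x : A × A × A => f₂ x.2.1 x.2.2) := by
      rw [himuniv]; exact Finset.mem_univ v
    simpa using this
  -- step 2: constancy
  have key : ∀ x ∈ C, ∀ a : A, f₂ a x.2.2 = f₂ x.2.1 x.2.2 ∧ f₂ x.2.1 a = f₂ x.2.1 x.2.2 := by
    intro x hx a
    constructor
    · obtain ⟨y, hy, hgy⟩ := hsurj (f₂ a x.2.2)
      by_cases hxy : y = x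
      · rw [hxy] at hgy; exact hgy.symm
      · exfalso
        have h1 : (f₁ x.1, f₂ a x.2.2) ∈ Omega f₁ f₂ x := by
          rw [mem_Omega]
          refine ⟨(x.1, a, x.2.2), ?_, rfl⟩
          simp only [dH3]
          split_ifs <;> omega
        have h2 : (f₁ x.1, f₂ a x.2.2) ∈ Omega f₁ f₂ y := by
          rw [mem_Omega]
          refine ⟨(x.1, y.2.1, y.2.2), ?_, by simp [hgy]⟩
          simp only [dH3]
          split_ifs <;> omega
        exact Finset.disjoint_left.mp (hU x hx y hy (fun h => hxy h.symm)) h1 h2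
    · obtain ⟨y, hy, hgy⟩ := hsurj (f₂ x.2.1 a)
      by_cases hxy : y = x
      · rw [hxy] at hgy; exact hgy.symm
      · exfalso
        have h1 : (f₁ x.1, f₂ x.2.1 a) ∈ Omega f₁ f₂ x := by
          rw [mem_Omega]
          refine ⟨(x.1, x.2.1, a), ?_, rfl⟩
          simp only [dH3]
          split_ifs <;> omega
        have h2 : (f₁ x.1, f₂ x.2.1 a) ∈ Omega f₁ f₂ y := by
          rw [mem_Omega]
          refine ⟨(x.1, y.2.1, y.2.2), ?_, by simp [hgy]⟩
          simp only [dH3]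
          split_ifs <;> omega
        exact Finset.disjoint_left.mp (hU x hx y hy (fun h => hxy h.symm)) h1 h2
  -- step 3
  have h2card : 1 < C.card := by omega
  obtain ⟨x, hx, y, hy, hxy⟩ := Finset.one_lt_card.mp h2card
  have e1 : f₂ x.2.1 y.2.2 = f₂ x.2.1 x.2.2 := (key x hx y.2.2).2
  have e2 : f₂ x.2.1 y.2.2 = f₂ y.2.1 y.2.2 := (key y hy x.2.1).1
  exact g_inj hU hx hy hxy (e1 ▸ e2)

theorem stmt10 {A : Type*} [Fintype A] [DecidableEq A] (hA : 2 ≤ Fintype.card A) :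
    (∃ (f₁ : A → A) (f₂ : A → A → A) (C : Finset (A × A × A)),
        Unambiguous f₁ f₂ C ∧ C.card = Fintype.card A - 1) ∧
    (∀ (f₁ : A → A) (f₂ : A → A → A) (C : Finset (A × A × A)),
        Unambiguous f₁ f₂ C → C.card ≤ Fintype.card A - 1) := by
  exact ⟨achieve hA, fun f₁ f₂ C hU => converse hA f₁ f₂ C hU⟩
end

section
/- Let A be a finite alphabet, f₁ : A → A, f₂ : A × A → A, and let C ⊆ A³ be unambiguous for the Diamond Network. Then for every x ∈ C, the set Ω₂(x) = {(f₁(x₁'), f₂(x₂,x₃)) : x₁' ∈ A} has cardinality at least |C|. -/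
open Finset

lemma mem_Omega_aux {A : Type*} [Fintype A] [DecidableEq A] (f₁ : A → A) (f₂ : A → A → A)
    (x x' : A × A × A) (h : dH3 x' x ≤ 1) :
    (f₁ x'.1, f₂ x'.2.1 x'.2.2) ∈ Omega f₁ f₂ x := by
  exact Finset.mem_image.2 ⟨x', Finset.mem_filter.2 ⟨Finset.mem_univ _, h⟩, rfl⟩

theorem stmt14 {A : Type*} [Fintype A] [DecidableEq A]
    (f₁ : A → A) (f₂ : A → A → A) (C : Finset (A × A × A))
    (hC : Unambiguous f₁ f₂ C) :
    ∀ x ∈ C, C.card ≤ (Finset.univ.image fun b => (f₁ b, f₂ x.2.1 x.2.2)).card := by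
  intro x hx
  apply Finset.card_le_card_of_injOn (fun y => (f₁ y.1, f₂ x.2.1 x.2.2))
  · intro y _
    exact Finset.mem_image.2 ⟨y.1, Finset.mem_univ _, rfl⟩
  · intro y hy z hz heq
    by_contra hne
    have hf : f₁ y.1 = f₁ z.1 := (Prod.mk.injEq _ _ _ _ ▸ heq).1
    have hp : (f₁ y.1, f₂ z.2.1 y.2.2) ∈ Omega f₁ f₂ y := by
      have := mem_Omega_aux f₁ f₂ y (y.1, z.2.1, y.2.2) (by simp [dH3]; split <;> simp)
      simpa using this
    have hq : (f₁ y.1, f₂ z.2.1 y.2.2) ∈ Omega f₁ f₂ z := by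
      have := mem_Omega_aux f₁ f₂ z (z.1, z.2.1, y.2.2) (by simp [dH3]; split <;> simp)
      simpa [hf] using this
    simpa using (hC y hy z hz hne).le_bot (Finset.mem_inter.2 ⟨hp, hq⟩)
end
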